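/- For every integer n ≥ 0, the function Symm's operator applied to cos(nθ), namely S₀[cos(n·)](θ) = -(1/(2π)) ∫₀^π ln|cos θ - cos θ'| cos(n θ') dθ', equals λ_n cos(nθ), where λ₀ = (ln 2)/2 and λ_n = 1/(2n) for n ≥ 1. -/

import Mathlib

open Real MeasureTheory intervalIntegral


lemma integral_cos_smul (c : ℝ) : ∫ t in (0:ℝ)..π, Real.cos (c*t) = if c = 0 then π else Real.sin (c*π)/c := by
  rcases eq_or_ne c 0 with rfl | hc
  · simp
  · rw [if_neg hc, intervalIntegral.integral_comp_mul_left _ hc]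
    simp [integral_cos, hc, smul_eq_mul, div_eq_inv_mul]

lemma cos_orth (j m : ℕ) : ∫ t in (0:ℝ)..π, Real.cos (j*t) * Real.cos (m*t)
    = if j = m then (if j = 0 then π else π/2) else 0 := by
  have key : ∀ t : ℝ, Real.cos (j*t) * Real.cos (m*t)
      = (Real.cos (((j:ℝ)+m)*t) + Real.cos (((j:ℝ)-m)*t))/2 := by
    intro t
    have h1 : ((j:ℝ)+m)*t = j*t + m*t := by ring
    have h2 : ((j:ℝ)-m)*t = j*t - m*t := by ring
    rw [h1, h2, Real.cos_add, Real.cos_sub]; ring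
  simp only [key]
  have hInt : ∀ c : ℝ, IntervalIntegrable (fun t => Real.cos (c*t)) volume 0 π := by
    intro c; exact (Real.continuous_cos.comp (continuous_const.mul continuous_id)).intervalIntegrable 0 π
  rw [intervalIntegral.integral_div, intervalIntegral.integral_add (hInt _) (hInt _),
    integral_cos_smul, integral_cos_smul]
  have hsin : ∀ k : ℤ, Real.sin ((k:ℝ)*π) = 0 := fun k => Real.sin_int_mul_pi k
  rcases eq_or_ne j m with rfl | hjm
  · rcases eq_or_ne j 0 with rfl | hj
    · norm_num
    · have h1 : ((j:ℝ) + j) ≠ 0 := by positivity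
      rw [if_neg h1, if_pos (by ring : (j:ℝ) - j = 0)]
      have := hsin ((j:ℤ) + j)
      push_cast at this
      rw [if_pos rfl, if_neg hj]
      rw [show ((j:ℝ)+j)*π = (↑((j:ℤ)+j):ℝ)*π by push_cast; ring] at *
      rw [hsin ((j:ℤ)+(j:ℤ))]
      ring
  · have h1 : ((j:ℝ) + m) ≠ 0 ∨ j = 0 ∧ m = 0 := by
      rcases eq_or_ne ((j:ℝ)+m) 0 with h | h
      · right
        constructor <;> [skip; skip] <;>
        · have hj' : (j:ℝ) = 0 ∧ (m:ℝ) = 0 := by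
            constructor <;> nlinarith [Nat.cast_nonneg (α := ℝ) j, Nat.cast_nonneg (α := ℝ) m]
          simp only [Nat.cast_eq_zero] at hj' ⊢
          first | exact hj'.1 | exact hj'.2
      · left; exact h
    have hsum : ((j:ℝ) + m) ≠ 0 := by
      rcases h1 with h | ⟨h, h'⟩
      · exact h
      · exact absurd (h.trans h'.symm) hjm
    have hdiff : ((j:ℝ) - m) ≠ 0 := by
      intro h
      exact hjm (by exact_mod_cast sub_eq_zero.mp h)
    rw [if_neg hsum, if_neg hdiff, if_neg hjm]
    rw [show ((j:ℝ)+m)*π = (↑((j:ℤ)+m):ℝ)*π by push_cast; ring,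
        show ((j:ℝ)-m)*π = (↑((j:ℤ)-m):ℝ)*π by push_cast; ring, hsin, hsin]
    ring

lemma intInt_log01 : IntervalIntegrable Real.log volume 0 1 := by
  have hrp : IntervalIntegrable (fun x : ℝ => 2 * x ^ (-(1/2) : ℝ)) volume 0 1 :=
    (intervalIntegrable_rpow' (by norm_num)).const_mul 2
  refine hrp.mono_fun Real.measurable_log.aestronglyMeasurable ?_
  rw [Filter.EventuallyLE, ae_restrict_iff' measurableSet_uIoc]
  filter_upwards with x hx
  rw [Set.uIoc_of_le (by norm_num : (0:ℝ) ≤ 1)] at hx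
  obtain ⟨hx0, hx1⟩ := hx
  have hp : (0:ℝ) < x ^ (-(1/2) : ℝ) := Real.rpow_pos_of_pos hx0 _
  have h1 : ‖Real.log x‖ = -Real.log x := by
    rw [Real.norm_eq_abs]; exact abs_of_nonpos (Real.log_nonpos hx0.le hx1)
  have h2 : Real.log (x ^ (-(1/2) : ℝ)) ≤ x ^ (-(1/2) : ℝ) - 1 :=
    Real.log_le_sub_one_of_pos hp
  rw [Real.log_rpow hx0] at h2
  have : ‖2 * x ^ (-(1/2):ℝ)‖ = 2 * x ^ (-(1/2):ℝ) := by
    rw [Real.norm_eq_abs]; exact abs_of_nonneg (by positivity)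
  rw [h1, this]; nlinarith

lemma intInt_log_abs (a b : ℝ) : IntervalIntegrable (fun x : ℝ => Real.log |x|) volume a b := by
  set M : ℝ := max (max |a| |b|) 1 with hM
  have hM1 : (1:ℝ) ≤ M := le_max_right _ _
  have h0M : IntervalIntegrable Real.log volume 0 M := by
    refine intInt_log01.trans ?_
    exact intervalIntegrable_log (by
      rw [Set.uIcc_of_le hM1]
      rintro ⟨h, -⟩
      norm_num at h)
  have habs0M : IntervalIntegrable (fun x : ℝ => Real.log |x|) volume 0 M := by
    refine h0M.mono_fun (Real.measurable_log.comp measurable_abs).aestronglyMeasurable ?_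
    rw [Filter.EventuallyLE, ae_restrict_iff' measurableSet_uIoc]
    filter_upwards with x hx
    rw [Set.uIoc_of_le (by linarith : (0:ℝ) ≤ M)] at hx
    rw [abs_of_pos hx.1]
  have hneg : IntervalIntegrable (fun x : ℝ => Real.log |x|) volume (-M) 0 := by
    have := habs0M.comp_mul_left (c := -1)
    have heq : (fun x : ℝ => Real.log |(-1:ℝ) * x|) = fun x : ℝ => Real.log |x| := by
      funext x; rw [neg_one_mul, abs_neg]
    rw [heq] at this
    have h1 : (0:ℝ)/(-1) = 0 := by norm_num
    have h2 : M/(-1) = -M := by ring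
    rw [h1, h2] at this
    exact this.symm
  refine (hneg.trans habs0M).mono_set ?_
  rw [Set.uIcc_of_le (by linarith : -M ≤ M)]
  have hA : |a| ≤ M := le_trans (le_max_left _ _) (le_max_left _ _)
  have hB : |b| ≤ M := le_trans (le_max_right _ _) (le_max_left _ _)
  intro x hx
  rcases Set.mem_uIcc.mp hx with ⟨h1, h2⟩ | ⟨h1, h2⟩ <;>
    constructor <;> cases abs_le.mp hA <;> cases abs_le.mp hB <;> linarith

lemma intInt_log_abs_sin_base :
    IntervalIntegrable (fun x : ℝ => Real.log |Real.sin x|) volume (-(π/2)) (π/2) := by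
  have hb : IntervalIntegrable (fun x : ℝ => Real.log (π/2) - Real.log |x|) volume (-(π/2)) (π/2) :=
    (_root_.intervalIntegrable_const).sub (intInt_log_abs _ _)
  refine hb.mono_fun
    (Real.measurable_log.comp (measurable_abs.comp Real.measurable_sin)).aestronglyMeasurable ?_
  rw [Filter.EventuallyLE, ae_restrict_iff' measurableSet_uIoc]
  have h0 : ∀ᵐ x : ℝ, x ≠ 0 := by
    rw [ae_iff]
    simpa using measure_singleton (0:ℝ)
  filter_upwards [h0] with x hx0 hx
  rw [Set.uIoc_of_le (by linarith [pi_pos] : -(π/2) ≤ π/2)] at hx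
  have hxa : |x| ≤ π/2 := abs_le.mpr ⟨hx.1.le, hx.2⟩
  have hxp : 0 < |x| := abs_pos.mpr hx0
  -- Jordan: 2/π * |x| ≤ sin |x| = |sin x|
  have hj : 2/π * |x| ≤ Real.sin |x| := Real.mul_le_sin (abs_nonneg x) hxa
  have hπ := pi_pos
  obtain ⟨hx1, hx2⟩ := hx
  have hsabs : Real.sin |x| = |Real.sin x| := by
    rcases le_or_gt 0 x with h | h
    · rw [abs_of_nonneg h, abs_of_nonneg (Real.sin_nonneg_of_nonneg_of_le_pi h (by linarith))]
    · rw [abs_of_neg h, abs_of_nonpos (by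
        have h2 : Real.sin (-x) ≥ 0 := Real.sin_nonneg_of_nonneg_of_le_pi (by linarith) (by linarith)
        rw [Real.sin_neg] at h2; linarith), Real.sin_neg]
  rw [hsabs] at hj
  have hsp : 0 < |Real.sin x| := lt_of_lt_of_le (by positivity) hj
  have hs1 : |Real.sin x| ≤ 1 := abs_sin_le_one x
  have hlow : Real.log (2/π * |x|) ≤ Real.log |Real.sin x| := Real.log_le_log (by positivity) hj
  rw [Real.log_mul (by positivity) (ne_of_gt hxp), Real.log_div (by norm_num) (ne_of_gt pi_pos)] at hlow
  have hup : Real.log |Real.sin x| ≤ 0 := Real.log_nonpos (abs_nonneg _) hs1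
  have hrhs : 0 ≤ Real.log (π/2) - Real.log |x| := by
    have := Real.log_le_log hxp hxa
    linarith
  rw [Real.norm_eq_abs, Real.norm_eq_abs, abs_of_nonpos hup, abs_of_nonneg hrhs]
  have hlog2 : Real.log (π/2) = Real.log π - Real.log 2 :=
    Real.log_div (ne_of_gt pi_pos) (by norm_num)
  linarith
lemma intInt_log_abs_sin (a b : ℝ) :
    IntervalIntegrable (fun x : ℝ => Real.log |Real.sin x|) volume a b := by
  set f : ℝ → ℝ := fun x => Real.log |Real.sin x| with hf
  have copy : ∀ k : ℤ, IntervalIntegrable f volume (k*π - π/2) (k*π + π/2) := by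
    intro k
    have h := intInt_log_abs_sin_base.comp_add_right (-(k*π))
    have heq : (fun x : ℝ => f (x + -(k*π))) = f := by
      funext x
      show Real.log |Real.sin (x + -(k*π))| = Real.log |Real.sin x|
      have h1 : Real.sin (x + -(k*π)) = Real.sin x * Real.cos (k*π) - Real.cos x * Real.sin (k*π) := by
        rw [← Real.sin_sub]; ring_nf
      rw [h1, Real.sin_int_mul_pi, mul_zero, sub_zero, abs_mul, Real.abs_cos_int_mul_pi, mul_one]
    rw [heq] at h
    convert h using 1 <;> ring
  have chain : ∀ n : ℕ, IntervalIntegrable f volume (-(n*π) - π/2) (n*π + π/2) := by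
    intro n
    induction n with
    | zero =>
      have h0 := copy 0
      convert h0 using 1 <;> push_cast <;> ring
    | succ n ih =>
      have cL : IntervalIntegrable f volume (-((n+1:ℕ)*π) - π/2) (-(n*π) - π/2) := by
        have := copy (-(n+1 : ℤ))
        convert this using 1 <;> push_cast <;> ring
      have cR : IntervalIntegrable f volume (n*π + π/2) ((n+1:ℕ)*π + π/2) := by
        have := copy ((n+1 : ℤ))
        convert this using 1 <;> push_cast <;> ring
      exact (cL.trans ih).trans cR
  obtain ⟨n, hn⟩ := exists_nat_ge (max |a| |b|)
  refine (chain n).mono_set ?_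
  have hπ := pi_gt_three
  have hA : |a| ≤ n*π + π/2 := by
    have h1 : |a| ≤ n := le_trans (le_max_left _ _) hn
    nlinarith [Nat.cast_nonneg (α := ℝ) n]
  have hB : |b| ≤ n*π + π/2 := by
    have h1 : |b| ≤ n := le_trans (le_max_right _ _) hn
    nlinarith [Nat.cast_nonneg (α := ℝ) n]
  rw [Set.uIcc_of_le (by nlinarith [Nat.cast_nonneg (α := ℝ) n] : -(n*π) - π/2 ≤ n*π + π/2)]
  intro x hx
  rcases Set.mem_uIcc.mp hx with ⟨h1, h2⟩ | ⟨h1, h2⟩ <;>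
    constructor <;> cases abs_le.mp hA <;> cases abs_le.mp hB <;> linarith

lemma intInt_log_abs_sin_shift (c a b : ℝ) :
    IntervalIntegrable (fun x : ℝ => Real.log |Real.sin (x + c)|) volume a b := by
  have h := (intInt_log_abs_sin (a+c) (b+c)).comp_add_right c
  convert h using 1 <;> ring

noncomputable def Lr (r x : ℝ) : ℝ := Real.log (‖1 - (r:ℂ) * Complex.exp (x * Complex.I)‖)

lemma hasSum_Lr (r x : ℝ) (h0 : 0 ≤ r) (h1 : r < 1) :
    HasSum (fun k : ℕ => r^k / k * Real.cos (k*x)) (-(Lr r x)) := by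
  set z : ℂ := (r:ℂ) * Complex.exp (x * Complex.I) with hz
  have hnorm : ‖z‖ < 1 := by
    rw [hz, norm_mul,
      Complex.norm_real, Complex.norm_exp_ofReal_mul_I, Real.norm_eq_abs, mul_one, _root_.abs_of_nonneg h0]
    exact h1
  have h := Complex.hasSum_re (Complex.hasSum_taylorSeries_neg_log hnorm)
  have hre : (-Complex.log (1 - z)).re = -(Lr r x) := by
    rw [Complex.neg_re, Complex.log_re]; rfl
  rw [hre] at h
  have heq : (fun k : ℕ => (z^k / (k:ℂ)).re) = fun k : ℕ => r^k / k * Real.cos (k*x) := by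
    funext k
    have h1 : z^k = ((r^k : ℝ) : ℂ) * Complex.exp (((k*x : ℝ):ℂ) * Complex.I) := by
      rw [hz, mul_pow, ← Complex.exp_nat_mul]
      push_cast
      ring_nf
    have h2 : z^k / (k:ℂ) = ((r^k / k : ℝ) : ℂ) * Complex.exp (((k*x : ℝ):ℂ) * Complex.I) := by
      rw [h1]; push_cast; ring
    rw [h2, Complex.re_ofReal_mul, Complex.exp_ofReal_mul_I_re]
  rw [heq] at h
  exact h
lemma abs_sq_eq (r x : ℝ) :
    (‖1 - (r:ℂ) * Complex.exp (x * Complex.I)‖)^2 = 1 - 2*r*Real.cos x + r^2 := by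
  rw [Complex.sq_norm, Complex.normSq_apply]
  have hre : (1 - (r:ℂ) * Complex.exp (x * Complex.I)).re = 1 - r * Real.cos x := by
    rw [Complex.sub_re, Complex.one_re, Complex.re_ofReal_mul, Complex.exp_ofReal_mul_I_re]
  have him : (1 - (r:ℂ) * Complex.exp (x * Complex.I)).im = -(r * Real.sin x) := by
    rw [Complex.sub_im, Complex.one_im, Complex.im_ofReal_mul, Complex.exp_ofReal_mul_I_im]
    ring
  rw [hre, him]
  nlinarith [Real.sin_sq_add_cos_sq x]

-- |sin x| ≤ abs(1 - r e^{ix}) ≤ 2  for r ∈ [0,1]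
lemma abs_lower (r x : ℝ) (h0 : 0 ≤ r) (h1 : r ≤ 1) :
    |Real.sin x| ≤ ‖1 - (r:ℂ) * Complex.exp (x * Complex.I)‖ := by
  have h := abs_sq_eq r x
  have habs : (0:ℝ) ≤ ‖1 - (r:ℂ) * Complex.exp (x * Complex.I)‖ := norm_nonneg _
  nlinarith [Real.sin_sq_add_cos_sq x, sq_abs (Real.sin x), abs_nonneg (Real.sin x),
    sq_nonneg (Real.cos x - r)]

lemma abs_upper (r x : ℝ) (h0 : 0 ≤ r) (h1 : r ≤ 1) :
    ‖1 - (r:ℂ) * Complex.exp (x * Complex.I)‖ ≤ 2 := by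
  have h := abs_sq_eq r x
  have habs : (0:ℝ) ≤ ‖1 - (r:ℂ) * Complex.exp (x * Complex.I)‖ := norm_nonneg _
  nlinarith [Real.neg_one_le_cos x, Real.cos_le_one x]

lemma Lr_bound (r x : ℝ) (h0 : 0 ≤ r) (h1 : r ≤ 1) (hx : Real.sin x ≠ 0) :
    |Lr r x| ≤ Real.log 2 + |Real.log (abs (Real.sin x))| := by
  have hsp : 0 < |Real.sin x| := abs_pos.mpr hx
  have hlow := abs_lower r x h0 h1
  have hup := abs_upper r x h0 h1
  have habsp : 0 < ‖1 - (r:ℂ) * Complex.exp (x * Complex.I)‖ := lt_of_lt_of_le hsp hlow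
  have hL1 : Lr r x ≤ Real.log 2 := Real.log_le_log habsp hup
  have hL2 : Real.log |Real.sin x| ≤ Lr r x := Real.log_le_log hsp hlow
  have h2 : (0:ℝ) ≤ Real.log 2 := Real.log_nonneg (by norm_num)
  rw [abs_le]
  have hna := neg_abs_le (Real.log (abs (Real.sin x)))
  have hpa := le_abs_self (Real.log (abs (Real.sin x)))
  have haa := abs_nonneg (Real.log (abs (Real.sin x)))
  constructor <;> linarith

lemma Lr_one_add (t θ : ℝ) (h1 : Real.sin (t+θ) ≠ 0) (h2 : Real.sin (t-θ) ≠ 0) :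
    Lr 1 (t+θ) + Lr 1 (t-θ) = Real.log 2 + Real.log |Real.cos θ - Real.cos t| := by
  set A := ‖1 - ((1:ℝ):ℂ) * Complex.exp (((t+θ):ℝ) * Complex.I)‖ with hA
  set B := ‖1 - ((1:ℝ):ℂ) * Complex.exp (((t-θ):ℝ) * Complex.I)‖ with hB
  have hAp : 0 < A := lt_of_lt_of_le (abs_pos.mpr h1) (abs_lower 1 (t+θ) zero_le_one le_rfl)
  have hBp : 0 < B := lt_of_lt_of_le (abs_pos.mpr h2) (abs_lower 1 (t-θ) zero_le_one le_rfl)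
  have hA2 : A^2 = 2 - 2*Real.cos (t+θ) := by
    have := abs_sq_eq 1 (t+θ); rw [← hA] at this; linarith
  have hB2 : B^2 = 2 - 2*Real.cos (t-θ) := by
    have := abs_sq_eq 1 (t-θ); rw [← hB] at this; linarith
  have hprod : (A*B)^2 = (2*|Real.cos θ - Real.cos t|)^2 := by
    rw [mul_pow, hA2, hB2, mul_pow, sq_abs, Real.cos_add, Real.cos_sub]
    nlinarith [Real.sin_sq_add_cos_sq t, Real.sin_sq_add_cos_sq θ]
  have hAB : A * B = 2*|Real.cos θ - Real.cos t| := by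
    have h4 : 0 ≤ 2*|Real.cos θ - Real.cos t| := by positivity
    nlinarith [mul_pos hAp hBp]
  have hcc : Real.cos θ - Real.cos t ≠ 0 := by
    intro h
    rw [h, abs_zero, mul_zero] at hAB
    exact (mul_pos hAp hBp).ne' hAB
  have : Lr 1 (t+θ) + Lr 1 (t-θ) = Real.log (A*B) := by
    rw [Real.log_mul hAp.ne' hBp.ne']
    rfl
  rw [this, hAB, Real.log_mul (by norm_num) (abs_ne_zero.mpr hcc)]
lemma integral_Lr (n : ℕ) (θ : ℝ) (r : ℝ) (h0 : 0 ≤ r) (h1 : r < 1) :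
    ∫ t in (0:ℝ)..π, (Lr r (t+θ) + Lr r (t-θ)) * Real.cos (n*t)
      = if n = 0 then 0 else -(π * r^n * Real.cos (n*θ) / n) := by
  set F : ℕ → ℝ → ℝ :=
    fun k t => (r^k/k * (2 * Real.cos (k*θ))) * (Real.cos (k*t) * Real.cos (n*t)) with hF
  set S : ℝ := if n = 0 then 0 else π * r^n * Real.cos (n*θ) / n with hS
  have hrk : ∀ k : ℕ, |r^k / k| ≤ r^k := by
    intro k
    cases k with
    | zero => simp
    | succ m =>
      have hp : (0:ℝ) ≤ r^(m+1) := pow_nonneg h0 _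
      have hc : (1:ℝ) ≤ (m+1 : ℕ) := by exact_mod_cast Nat.one_le_iff_ne_zero.mpr (Nat.succ_ne_zero m)
      rw [abs_of_nonneg (by positivity)]
      rw [div_le_iff₀ (by positivity)]
      nlinarith
  have key : HasSum (fun k => ∫ t in (0:ℝ)..π, F k t)
      (∫ t in (0:ℝ)..π, (fun t => -(Lr r (t+θ) + Lr r (t-θ)) * Real.cos (n*t)) t) := by
    apply intervalIntegral.hasSum_integral_of_dominated_convergence
      (bound := fun k _ => 2 * r^k)
    · intro k
      apply Continuous.aestronglyMeasurable
      continuity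
    · intro k
      filter_upwards with t _
      have h1 : |Real.cos ((k:ℝ)*θ)| ≤ 1 := Real.abs_cos_le_one _
      have h2 : |Real.cos ((k:ℝ)*t)| ≤ 1 := Real.abs_cos_le_one _
      have h3 : |Real.cos ((n:ℝ)*t)| ≤ 1 := Real.abs_cos_le_one _
      have h4 := hrk k
      have h5 : (0:ℝ) ≤ r^k := pow_nonneg h0 _
      have : ‖F k t‖ = |r^k/k| * (2 * |Real.cos ((k:ℝ)*θ)|) * (|Real.cos ((k:ℝ)*t)| * |Real.cos ((n:ℝ)*t)|) := by
        rw [hF]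
        simp only [Real.norm_eq_abs, abs_mul]
        rw [abs_of_nonneg (by norm_num : (0:ℝ) ≤ 2)]
      rw [this]
      have hh : |r ^ k / ↑k| * (2 * |Real.cos (↑k * θ)|) ≤ r^k * 2 := by
        nlinarith [abs_nonneg (r^k/(k:ℝ)), abs_nonneg (Real.cos ((k:ℝ)*θ))]
      have hbc : |Real.cos ((k:ℝ)*t)| * |Real.cos ((n:ℝ)*t)| ≤ 1 := by
        nlinarith [abs_nonneg (Real.cos ((k:ℝ)*t)), abs_nonneg (Real.cos ((n:ℝ)*t))]
      calc |r^k/(k:ℝ)| * (2 * |Real.cos ((k:ℝ)*θ)|) * (|Real.cos ((k:ℝ)*t)| * |Real.cos ((n:ℝ)*t)|)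
          ≤ (r^k * 2) * 1 := by
            apply mul_le_mul hh hbc
            · positivity
            · positivity
        _ = 2 * r^k := by ring
    · filter_upwards with t _
      exact (summable_geometric_of_lt_one h0 h1).mul_left 2
    · exact _root_.intervalIntegrable_const
    · filter_upwards with t _
      have hs := ((hasSum_Lr r (t+θ) h0 h1).add (hasSum_Lr r (t-θ) h0 h1)).mul_right (Real.cos (n*t))
      have heq : (fun k : ℕ => (r^k/k * Real.cos (k*(t+θ)) + r^k/k * Real.cos (k*(t-θ))) * Real.cos (n*t))
          = fun k => F k t := by
        funext k
        rw [hF]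
        have e1 : (k:ℝ)*(t+θ) = k*t + k*θ := by ring
        have e2 : (k:ℝ)*(t-θ) = k*t - k*θ := by ring
        rw [e1, e2, Real.cos_add, Real.cos_sub]
        ring
      rw [heq] at hs
      convert hs using 1
      all_goals first | rfl | ring
  have hterm : (fun k => ∫ t in (0:ℝ)..π, F k t) = fun k => if k = n then S else 0 := by
    funext k
    rw [hF]
    rw [intervalIntegral.integral_const_mul]
    rw [cos_orth k n]
    rcases eq_or_ne k n with rfl | hk
    · rcases eq_or_ne k 0 with rfl | hk0
      · simp [hS]
      · rw [if_pos rfl, if_pos rfl, if_neg hk0, hS, if_neg hk0]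
        have : (k:ℝ) ≠ 0 := Nat.cast_ne_zero.mpr hk0
        field_simp
    · rw [if_neg hk, if_neg hk, mul_zero]
  rw [hterm] at key
  have huniq := (hasSum_ite_eq n S).unique key
  have hneg : ∫ t in (0:ℝ)..π, (fun t => -(Lr r (t+θ) + Lr r (t-θ)) * Real.cos (n*t)) t
      = -∫ t in (0:ℝ)..π, (Lr r (t+θ) + Lr r (t-θ)) * Real.cos (n*t) := by
    rw [← intervalIntegral.integral_neg]
    congr 1
    funext t
    ring
  rw [hneg] at huniq
  rw [hS] at huniq
  rcases eq_or_ne n 0 with rfl | hn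
  · norm_num at huniq ⊢
    linarith
  · simp only [if_neg hn] at huniq ⊢
    linarith
-- main theorem assembly
lemma ae_sin_ne (c : ℝ) : ∀ᵐ t : ℝ, Real.sin (t + c) ≠ 0 := by
  have hset : {t : ℝ | Real.sin (t + c) = 0} = Set.range (fun k : ℤ => (k:ℝ)*π - c) := by
    ext t
    simp only [Set.mem_setOf_eq, Set.mem_range, Real.sin_eq_zero_iff]
    constructor
    · rintro ⟨k, hk⟩; exact ⟨k, by linarith⟩
    · rintro ⟨k, hk⟩; exact ⟨k, by linarith⟩
  rw [ae_iff]
  convert (Set.countable_range (fun k : ℤ => (k:ℝ)*π - c)).measure_zero volume using 2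
  rw [← hset]
  simp

/-- Symm's operator diagonalizes the cosine basis:
`S₀[cos(n·)](θ) = λ_n cos(nθ)` with `λ₀ = (ln 2)/2`, `λ_n = 1/(2n)` for `n ≥ 1`. -/
theorem symm_operator_diagonal (n : ℕ) (θ : ℝ) (hθ : θ ∈ Set.Ioo 0 Real.pi) :
    -(1 / (2 * Real.pi)) *
        ∫ θ' in (0:ℝ)..Real.pi, Real.log |Real.cos θ - Real.cos θ'| * Real.cos (n * θ')
      = (if n = 0 then Real.log 2 / 2 else 1 / (2 * n)) * Real.cos (n * θ) := by
  have hπ := pi_pos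
  -- the sequence of radii
  set rs : ℕ → ℝ := fun m => 1 - 1/(m+1) with hrs
  have hrs0 : ∀ m, 0 ≤ rs m := by
    intro m
    have h1 : (1:ℝ)/(m+1) ≤ 1 := by
      rw [div_le_one (by positivity)]
      linarith [Nat.cast_nonneg (α := ℝ) m]
    simp only [hrs]; linarith
  have hrs1 : ∀ m, rs m < 1 := by
    intro m
    have : (0:ℝ) < 1/(m+1) := by positivity
    simp only [hrs]; linarith
  have hrs_lim : Filter.Tendsto rs Filter.atTop (nhds 1) := by
    have h := tendsto_one_div_add_atTop_nhds_zero_nat (𝕜 := ℝ)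
    have := Filter.Tendsto.const_sub (1:ℝ) h
    simpa [hrs] using this
  -- a.e. conditions
  have hae : ∀ᵐ t : ℝ, Real.sin (t + θ) ≠ 0 ∧ Real.sin (t - θ) ≠ 0 := by
    filter_upwards [ae_sin_ne θ, ae_sin_ne (-θ)] with t h1 h2
    exact ⟨h1, by simpa [sub_eq_add_neg] using h2⟩
  -- dominating bound
  set bound : ℝ → ℝ := fun t =>
    (Real.log 2 + abs (Real.log (abs (Real.sin (t+θ))))) + (Real.log 2 + abs (Real.log (abs (Real.sin (t-θ))))) with hbound
  have hbound_int : IntervalIntegrable bound volume 0 π := by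
    apply IntervalIntegrable.add
    · exact (_root_.intervalIntegrable_const).add (intInt_log_abs_sin_shift θ 0 π).abs
    · have := (intInt_log_abs_sin_shift (-θ) 0 π).abs
      refine (_root_.intervalIntegrable_const).add ?_
      have heq : (fun x : ℝ => abs (Real.log (abs (Real.sin (x + -θ))))) = fun t => abs (Real.log (abs (Real.sin (t - θ)))) := by
        funext x; rw [sub_eq_add_neg]
      rw [heq] at this
      exact this
  have hbound_nonneg : ∀ t, 0 ≤ bound t := by
    intro t
    have h2 : (0:ℝ) ≤ Real.log 2 := Real.log_nonneg (by norm_num)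
    simp only [hbound]
    positivity
  -- measurability of Lr-type functions
  have hcont_inner : ∀ (r c : ℝ), Continuous (fun t : ℝ => ‖1 - (r:ℂ) * Complex.exp (((t+c):ℝ) * Complex.I)‖) := by
    intro r c
    apply continuous_norm.comp
    exact continuous_const.sub (continuous_const.mul (Complex.continuous_exp.comp
      ((Complex.continuous_ofReal.comp (continuous_id.add continuous_const)).mul continuous_const)))
  have hmeasL : ∀ (r c : ℝ), Measurable (fun t : ℝ => Lr r (t + c)) := by
    intro r c
    apply Real.measurable_log.comp
    exact (hcont_inner r c).measurable
  -- the limit function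
  set f : ℝ → ℝ := fun t => (Real.log 2 + Real.log |Real.cos θ - Real.cos t|) * Real.cos (n*t) with hf
  -- sequence of integrands
  set Fm : ℕ → ℝ → ℝ := fun m t => (Lr (rs m) (t+θ) + Lr (rs m) (t-θ)) * Real.cos (n*t) with hFm
  -- DCT
  have hDCT : Filter.Tendsto (fun m => ∫ t in (0:ℝ)..π, Fm m t) Filter.atTop
      (nhds (∫ t in (0:ℝ)..π, f t)) := by
    apply intervalIntegral.tendsto_integral_filter_of_dominated_convergence bound
    · filter_upwards with m
      apply AEStronglyMeasurable.mul
      · exact ((hmeasL (rs m) θ).add (by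
          have := hmeasL (rs m) (-θ)
          simpa [sub_eq_add_neg] using this)).aestronglyMeasurable
      · exact (Real.continuous_cos.comp (continuous_const.mul continuous_id)).aestronglyMeasurable
    · filter_upwards with m
      filter_upwards [hae] with t ⟨h1, h2⟩ _
      have b1 := Lr_bound (rs m) (t+θ) (hrs0 m) (hrs1 m).le h1
      have b2 := Lr_bound (rs m) (t-θ) (hrs0 m) (hrs1 m).le h2
      have hc : |Real.cos ((n:ℝ)*t)| ≤ 1 := Real.abs_cos_le_one _
      have : ‖Fm m t‖ ≤ (|Lr (rs m) (t+θ)| + |Lr (rs m) (t-θ)|) * 1 := by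
        rw [hFm]
        simp only [Real.norm_eq_abs, abs_mul]
        apply mul_le_mul (abs_add_le _ _) hc (abs_nonneg _)
        positivity
      simp only [hbound]
      calc ‖Fm m t‖ ≤ (|Lr (rs m) (t+θ)| + |Lr (rs m) (t-θ)|) * 1 := this
        _ = |Lr (rs m) (t+θ)| + |Lr (rs m) (t-θ)| := by ring
        _ ≤ _ := by
            have := abs_nonneg (Real.log |Real.sin (t+θ)|)
            have := abs_nonneg (Real.log |Real.sin (t-θ)|)
            linarith [b1, b2]
    · exact hbound_int
    · filter_upwards [hae] with t ⟨h1, h2⟩ _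
      have hA : (0:ℝ) < ‖1 - ((1:ℝ):ℂ) * Complex.exp (((t+θ):ℝ) * Complex.I)‖ :=
        lt_of_lt_of_le (abs_pos.mpr h1) (abs_lower 1 (t+θ) zero_le_one le_rfl)
      have hB : (0:ℝ) < ‖1 - ((1:ℝ):ℂ) * Complex.exp (((t-θ):ℝ) * Complex.I)‖ :=
        lt_of_lt_of_le (abs_pos.mpr h2) (abs_lower 1 (t-θ) zero_le_one le_rfl)
      have hcontA : Filter.Tendsto (fun m => Lr (rs m) (t+θ)) Filter.atTop (nhds (Lr 1 (t+θ))) := by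
        have hcf : Continuous (fun r : ℝ => ‖1 - (r:ℂ) * Complex.exp (((t+θ):ℝ) * Complex.I)‖) :=
          continuous_norm.comp (continuous_const.sub (Complex.continuous_ofReal.mul continuous_const))
        have hc : ContinuousAt (fun r : ℝ => Lr r (t+θ)) 1 := by
          unfold Lr
          exact hcf.continuousAt.log hA.ne'
        exact hc.tendsto.comp hrs_lim
      have hcontB : Filter.Tendsto (fun m => Lr (rs m) (t-θ)) Filter.atTop (nhds (Lr 1 (t-θ))) := by
        have hcf : Continuous (fun r : ℝ => ‖1 - (r:ℂ) * Complex.exp (((t-θ):ℝ) * Complex.I)‖) :=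
          continuous_norm.comp (continuous_const.sub (Complex.continuous_ofReal.mul continuous_const))
        have hc : ContinuousAt (fun r : ℝ => Lr r (t-θ)) 1 := by
          unfold Lr
          exact hcf.continuousAt.log hB.ne'
        exact hc.tendsto.comp hrs_lim
      have := (hcontA.add hcontB).mul_const (Real.cos ((n:ℝ)*t))
      rw [Lr_one_add t θ h1 h2] at this
      exact this
  -- value of each integral in the sequence
  have hval : ∀ m, ∫ t in (0:ℝ)..π, Fm m t
      = if n = 0 then 0 else -(π * (rs m)^n * Real.cos (n*θ) / n) := by
    intro m
    exact integral_Lr n θ (rs m) (hrs0 m) (hrs1 m)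
  have hlim2 : Filter.Tendsto (fun m => ∫ t in (0:ℝ)..π, Fm m t) Filter.atTop
      (nhds (if n = 0 then 0 else -(π * Real.cos (n*θ) / n))) := by
    simp only [hval]
    rcases eq_or_ne n 0 with rfl | hn
    · simpa using (tendsto_const_nhds : Filter.Tendsto (fun _ : ℕ => (0:ℝ)) Filter.atTop (nhds 0))
    · simp only [if_neg hn]
      have hpow : Filter.Tendsto (fun m => (rs m)^n) Filter.atTop (nhds 1) := by
        have := hrs_lim.pow n
        simpa using this
      have := ((hpow.const_mul π).mul_const (Real.cos (n*θ))).div_const (n:ℝ)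
      have h2 := this.neg
      convert h2 using 2 <;> ring
  have hfval : ∫ t in (0:ℝ)..π, f t = if n = 0 then 0 else -(π * Real.cos (n*θ) / n) :=
    tendsto_nhds_unique hDCT hlim2
  -- split off the constant
  have hint2 : IntervalIntegrable (fun t => Real.log |Real.cos θ - Real.cos t| * Real.cos (n*t)) volume 0 π := by
    refine (hbound_int.add (_root_.intervalIntegrable_const (c := Real.log 2))).mono_fun ?_ ?_
    · apply AEStronglyMeasurable.mul
      · apply Measurable.aestronglyMeasurable
        apply Real.measurable_log.comp
        exact (continuous_const.sub Real.continuous_cos).abs.measurable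
      · exact (Real.continuous_cos.comp (continuous_const.mul continuous_id)).aestronglyMeasurable
    · rw [Filter.EventuallyLE, ae_restrict_iff' measurableSet_uIoc]
      filter_upwards [hae] with t ⟨h1, h2⟩ _
      have b1 := Lr_bound 1 (t+θ) zero_le_one le_rfl h1
      have b2 := Lr_bound 1 (t-θ) zero_le_one le_rfl h2
      have hid := Lr_one_add t θ h1 h2
      have hc : |Real.cos ((n:ℝ)*t)| ≤ 1 := Real.abs_cos_le_one _
      have h2' : (0:ℝ) ≤ Real.log 2 := Real.log_nonneg (by norm_num)
      have hnn : (0:ℝ) ≤ bound t + Real.log 2 := by linarith [hbound_nonneg t]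
      simp only [Real.norm_eq_abs, abs_mul]
      rw [abs_of_nonneg hnn]
      have hlog : abs (Real.log (abs (Real.cos θ - Real.cos t))) ≤ bound t + Real.log 2 := by
        have : Real.log |Real.cos θ - Real.cos t| = Lr 1 (t+θ) + Lr 1 (t-θ) - Real.log 2 := by
          linarith [hid]
        rw [this]
        have := abs_sub (Lr 1 (t+θ) + Lr 1 (t-θ)) (Real.log 2)
        have habs2 : |Real.log 2| = Real.log 2 := abs_of_nonneg h2'
        simp only [hbound]
        calc |Lr 1 (t+θ) + Lr 1 (t-θ) - Real.log 2|
            ≤ |Lr 1 (t+θ)| + |Lr 1 (t-θ)| + |Real.log 2| := by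
              have := abs_add_le (Lr 1 (t+θ)) (Lr 1 (t-θ))
              have := abs_sub_abs_le_abs_sub (Lr 1 (t+θ) + Lr 1 (t-θ)) (Real.log 2)
              have h3 := abs_add_le (Lr 1 (t+θ) + Lr 1 (t-θ)) (-Real.log 2)
              rw [abs_neg] at h3
              calc |Lr 1 (t+θ) + Lr 1 (t-θ) - Real.log 2|
                  = |(Lr 1 (t+θ) + Lr 1 (t-θ)) + (-Real.log 2)| := by ring_nf
                _ ≤ |Lr 1 (t+θ) + Lr 1 (t-θ)| + |Real.log 2| := by rw [← abs_neg (Real.log 2)] at h3 ⊢; simpa using h3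
                _ ≤ |Lr 1 (t+θ)| + |Lr 1 (t-θ)| + |Real.log 2| := by linarith [abs_add_le (Lr 1 (t+θ)) (Lr 1 (t-θ))]
        _ ≤ bound t + Real.log 2 := by
              simp only [hbound] at *
              rw [habs2]
              linarith [b1, b2]
      calc abs (Real.log (abs (Real.cos θ - Real.cos t))) * |Real.cos ((n:ℝ)*t)|
          ≤ (bound t + Real.log 2) * 1 := by
            apply mul_le_mul hlog hc (abs_nonneg _) (by linarith [hbound_nonneg t])
        _ = bound t + Real.log 2 := by ring
  have hsplit : ∫ t in (0:ℝ)..π, f t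
      = (∫ t in (0:ℝ)..π, Real.log 2 * Real.cos (n*t))
        + ∫ t in (0:ℝ)..π, Real.log |Real.cos θ - Real.cos t| * Real.cos (n*t) := by
    rw [← intervalIntegral.integral_add (by
        exact (continuous_const.mul (Real.continuous_cos.comp (continuous_const.mul continuous_id))).intervalIntegrable 0 π) hint2]
    congr 1
    funext t
    simp only [hf]
    ring
  have hconst : ∫ t in (0:ℝ)..π, Real.log 2 * Real.cos (n*t)
      = if n = 0 then π * Real.log 2 else 0 := by
    rw [intervalIntegral.integral_const_mul, integral_cos_smul]
    rcases eq_or_ne n 0 with rfl | hn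
    · norm_num
      ring
    · have h1 : ((n:ℝ)) ≠ 0 := Nat.cast_ne_zero.mpr hn
      rw [if_neg h1, if_neg hn]
      rw [show ((n:ℝ))*π = ((n:ℤ):ℝ)*π by push_cast; ring, Real.sin_int_mul_pi]
      ring
  have hI : ∫ t in (0:ℝ)..π, Real.log |Real.cos θ - Real.cos t| * Real.cos (n*t)
      = if n = 0 then -(π * Real.log 2) else -(π * Real.cos (n*θ) / n) := by
    have := hsplit
    rw [hfval, hconst] at this
    rcases eq_or_ne n 0 with rfl | hn
    · norm_num at this ⊢
      linarith
    · simp only [if_neg hn] at this ⊢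
      linarith
  rw [hI]
  rcases eq_or_ne n 0 with rfl | hn
  · simp only [if_pos rfl]
    push_cast
    rw [zero_mul, Real.cos_zero]
    field_simp
  · simp only [if_neg hn]
    have h1 : ((n:ℝ)) ≠ 0 := Nat.cast_ne_zero.mpr hn
    field_simp
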